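/- In the generalized left-corner transformation of a nullary-free grammar, every derivation of the empty string rooted at a slashed nonterminal consists of a chain of unary rules among slashed nonterminals terminated by a single nullary rule X/X → ε: formally, if G has no nullary rules and t is a derivation in GLCT(G, P, C) rooted at some X/Y with yield ε, then every internal node of t is labeled by a slashed nonterminal of the form X/Z, each non-leaf rule application in t is a unary rule X/Z → X/Z' (arising from a unary rule Z' → Z in P), and the unique leaf rule is X/X → ε. -/

import Mathlib

/-- Symbols of a grammar: nonterminals `N` or terminals `T`. -/
abbrev GSym (N T : Type) := N ⊕ T

/-- A weighted production rule `X →w α`. -/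
abbrev GRule (N T W : Type) := N × List (GSym N T) × W

/-- A weighted context-free grammar (rules form a bag/set of weighted rules). -/
structure WCFG (N T W : Type) where
  start : N
  rules : Set (GRule N T W)

/-- Derivation trees (with a possible `gap` leaf, used to represent a removed
left corner; well-formed derivations contain no gaps). -/
inductive DTree (N T W : Type) where
  | leaf : T → DTree N T W
  | gap  : DTree N T W
  | node : N → W → List (DTree N T W) → DTree N T W

namespace DTree

variable {N T W : Type}

def label : DTree N T W → Option (GSym N T)
  | leaf a => some (Sum.inr a)
  | gap => none
  | node X _ _ => some (Sum.inl X)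

def yield : DTree N T W → List T
  | leaf a => [a]
  | gap => []
  | node _ _ ts => (ts.attach.map fun t => t.1.yield).flatten
decreasing_by simp only [DTree.node.sizeOf_spec]; have := List.sizeOf_lt_of_mem t.2; omega

def weight [Semiring W] : DTree N T W → W
  | leaf _ => 1
  | gap => 1
  | node _ w ts => w * (ts.attach.map fun t => t.1.weight).prod
decreasing_by simp only [DTree.node.sizeOf_spec]; have := List.sizeOf_lt_of_mem t.2; omega

/-- The list of weights of the rules applied at internal nodes. -/
def ruleWeights : DTree N T W → List W
  | leaf _ => []
  | gap => []
  | node _ w ts => w :: (ts.attach.map fun t => t.1.ruleWeights).flatten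
decreasing_by simp only [DTree.node.sizeOf_spec]; have := List.sizeOf_lt_of_mem t.2; omega

/-- Left-recursion depth: length of the path from the root to the leftmost leaf. -/
def lrDepth : DTree N T W → ℕ
  | leaf _ => 0
  | gap => 0
  | node _ _ [] => 0
  | node _ _ (t1 :: _) => t1.lrDepth + 1

/-- `Sub s t` : `s` is a subtree of `t`. -/
inductive Sub : DTree N T W → DTree N T W → Prop
  | refl (t : DTree N T W) : Sub t t
  | child {s t : DTree N T W} {X w ts} : t ∈ ts → Sub s t → Sub s (node X w ts)

end DTree

variable {N T W : Type}

/-- The children list `ts` together with head `X` and weight `w` matches a rule in `R`. -/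
def RuleApp (R : Set (GRule N T W)) (X : N) (ts : List (DTree N T W)) (w : W) : Prop :=
  ∃ rhs, (X, rhs, w) ∈ R ∧ ts.map DTree.label = rhs.map some

/-- Well-formed derivations of a grammar. -/
inductive DTree.WF (G : WCFG N T W) : DTree N T W → Prop
  | leaf (a : T) : DTree.WF G (DTree.leaf a)
  | node {X : N} {w : W} {ts : List (DTree N T W)} :
      RuleApp G.rules X ts w → (∀ t ∈ ts, DTree.WF G t) →
      DTree.WF G (DTree.node X w ts)

/-- The weighted language of a symbol `α`: the sum of the weights of all
well-formed derivations rooted at `α` whose yield is `x`. -/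
noncomputable def WCFG.lang [Semiring W] (G : WCFG N T W) (α : GSym N T) (x : List T) : W :=
  ∑ᶠ t : {t : DTree N T W // t.WF G ∧ t.label = some α ∧ t.yield = x}, (t : DTree N T W).weight

/-- `α` occurs as the label of some subderivation of some derivation rooted at the start symbol. -/
def WCFG.Useful (G : WCFG N T W) (α : GSym N T) : Prop :=
  ∃ t s : DTree N T W, t.WF G ∧ t.label = some (Sum.inl G.start) ∧ s.Sub t ∧ s.label = some α

/-- Trimming: keep only the rules all of whose symbols are useful. -/
def WCFG.trim (G : WCFG N T W) : WCFG N T W where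
  start := G.start
  rules := {r | r ∈ G.rules ∧ ∀ s ∈ (Sum.inl r.1 :: r.2.1), G.Useful s}

/-- A rule participates in some derivation rooted at the start symbol. -/
def WCFG.RuleUseful (G : WCFG N T W) (r : GRule N T W) : Prop :=
  ∃ t s : DTree N T W, t.WF G ∧ t.label = some (Sum.inl G.start) ∧ s.Sub t ∧
    ∃ ts, s = DTree.node r.1 r.2.2 ts ∧ ts.map DTree.label = r.2.1.map some

/-- Union of weighted languages. -/
def wunion [Semiring W] (L L' : List T → W) : List T → W := fun x => L x + L' x

/-- Concatenation of weighted languages: sum over the two-part factorizations. -/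
def wconc [Semiring W] (L L' : List T → W) : List T → W := fun x =>
  ((List.range (x.length + 1)).map (fun i => L (x.take i) * L' (x.drop i))).sum

/-- The zero weighted language. -/
def wzero [Semiring W] : List T → W := fun _ => 0

open Classical in
/-- The unit weighted language: `1` on the empty string, `0` elsewhere. -/
noncomputable def wone [Semiring W] : List T → W := fun x => if x = [] then 1 else 0

/-- Nonterminals of the output of the (generalized) left-corner / speculation
transformations: originals `X`, frozen `X̃`, and slashed `α/β`. -/
inductive LCNT (N T : Type) where
  | orig : N → LCNT N T
  | frozen : N → LCNT N T
  | slash : GSym N T → GSym N T → LCNT N T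

/-- Embedding of original symbols into the transformed grammar's symbols. -/
def emb : GSym N T → GSym (LCNT N T) T := Sum.map LCNT.orig id

/-- The frozen version `α̃` of a symbol (terminals are left unchanged). -/
def frz : GSym N T → GSym (LCNT N T) T
  | Sum.inl X => Sum.inl (LCNT.frozen X)
  | Sum.inr a => Sum.inr a

/-- The generalized left-corner transformation GLCT(G, P, C). -/
def GLCT (G : WCFG N T W) [One W] (P : Set (GRule N T W)) (C : Set (GSym N T)) :
    WCFG (LCNT N T) T W where
  start := LCNT.orig G.start
  rules :=
    {r | ∃ X : N, (Sum.inl X : GSym N T) ∉ C ∧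
          r = (LCNT.orig X, [Sum.inl (LCNT.frozen X)], (1 : W))} ∪
    {r | ∃ (X : N) (α : GSym N T), α ∈ C ∧
          r = (LCNT.orig X, [frz α, Sum.inl (LCNT.slash (Sum.inl X) α)], (1 : W))} ∪
    {r | ∃ α : GSym N T, r = (LCNT.slash α α, [], (1 : W))} ∪
    {r | ∃ (X : N) (α : GSym N T) (β : List (GSym N T)) (w : W) (Y : N),
          (X, α :: β, w) ∈ P ∧
          r = (LCNT.slash (Sum.inl Y) α,
               β.map emb ++ [Sum.inl (LCNT.slash (Sum.inl Y) (Sum.inl X))], w)} ∪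
    {r | ∃ (X : N) (rhs : List (GSym N T)) (w : W),
          (X, rhs, w) ∈ G.rules ∧ (X, rhs, w) ∉ P ∧ r = (LCNT.frozen X, rhs.map emb, w)} ∪
    {r | ∃ (X : N) (α : GSym N T) (β : List (GSym N T)) (w : W),
          (X, α :: β, w) ∈ P ∧ α ∉ C ∧ r = (LCNT.frozen X, frz α :: β.map emb, w)}

/-- The speculation transformation SPEC(G, P, C). -/
def SPEC (G : WCFG N T W) [One W] (P : Set (GRule N T W)) (C : Set (GSym N T)) :
    WCFG (LCNT N T) T W where
  start := LCNT.orig G.start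
  rules :=
    {r | ∃ X : N, (Sum.inl X : GSym N T) ∉ C ∧
          r = (LCNT.orig X, [Sum.inl (LCNT.frozen X)], (1 : W))} ∪
    {r | ∃ (X : N) (α : GSym N T), α ∈ C ∧
          r = (LCNT.orig X, [frz α, Sum.inl (LCNT.slash (Sum.inl X) α)], (1 : W))} ∪
    {r | ∃ α : GSym N T, r = (LCNT.slash α α, [], (1 : W))} ∪
    {r | ∃ (X : N) (α : GSym N T) (β : List (GSym N T)) (w : W) (Y : GSym N T),
          (X, α :: β, w) ∈ P ∧
          r = (LCNT.slash (Sum.inl X) Y,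
               Sum.inl (LCNT.slash α Y) :: β.map emb, w)} ∪
    {r | ∃ (X : N) (rhs : List (GSym N T)) (w : W),
          (X, rhs, w) ∈ G.rules ∧ (X, rhs, w) ∉ P ∧ r = (LCNT.frozen X, rhs.map emb, w)} ∪
    {r | ∃ (X : N) (α : GSym N T) (β : List (GSym N T)) (w : W),
          (X, α :: β, w) ∈ P ∧ α ∉ C ∧ r = (LCNT.frozen X, frz α :: β.map emb, w)}

/-- Edge relation of the left-recursion graph restricted to a rule set `R`:
an edge from `X` to the leftmost right-hand-side symbol of a rule in `R`. -/
def EdgeRel (R : Set (GRule N T W)) (a b : GSym N T) : Prop :=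
  ∃ (X : N) (rhs : List (GSym N T)) (w : W),
    a = Sum.inl X ∧ (X, rhs, w) ∈ R ∧ rhs.head? = some b

/-- A rule is left-recursive if its edge lies on a cycle of the left-recursion graph. -/
def LeftRecRule (G : WCFG N T W) (r : GRule N T W) : Prop :=
  ∃ b, r.2.1.head? = some b ∧ Relation.ReflTransGen (EdgeRel G.rules) b (Sum.inl r.1)

/-- `bottoms(P)`: the symbols that may appear at the bottom of a spine. -/
def bottoms (G : WCFG N T W) (P : Set (GRule N T W)) : Set (GSym N T) :=
  {α | ((∃ a : T, α = Sum.inr a) ∨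
        ∃ (X : N) (rhs : List (GSym N T)) (w : W),
          α = Sum.inl X ∧ (X, rhs, w) ∈ G.rules ∧ (X, rhs, w) ∉ P ∧ rhs ≠ []) ∧
       (∃ (X : N) (rhs : List (GSym N T)) (w : W), (X, rhs, w) ∈ P ∧ rhs.head? = some α)}


/-- `EpsChain P x y t` : `t` is a chain of unary slashed rules (with common
numerator `x`, arising from unary rules of `P`) from `x/y` down to the nullary
rule `x/x → ε`. -/
inductive EpsChain [One W] (P : Set (GRule N T W)) (x : GSym N T) :
    GSym N T → DTree (LCNT N T) T W → Prop
  | base : EpsChain P x x (DTree.node (LCNT.slash x x) 1 [])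
  | step {z : GSym N T} {X' : N} {w : W} {t : DTree (LCNT N T) T W} :
      (X', [z], w) ∈ P → EpsChain P x (Sum.inl X') t →
      EpsChain P x z (DTree.node (LCNT.slash x z) w [t])


section Aux
variable {N T W : Type}

lemma DTree_yield_node (X : N) (w : W) (ts : List (DTree N T W)) :
    (DTree.node X w ts).yield = (ts.map DTree.yield).flatten := by
  rw [DTree.yield]
  congr 1
  simp

lemma node_yield_ne {X : N} {w : W} {t1 : DTree N T W} {ts : List (DTree N T W)}
    (h : t1.yield ≠ []) : (DTree.node X w (t1 :: ts)).yield ≠ [] := by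
  rw [DTree_yield_node, List.map_cons]
  intro hc
  exact h (List.flatten_eq_nil_iff.mp hc _ (by simp))

lemma node_yield_nil {X : N} {w : W} {ts : List (DTree N T W)}
    (h : (DTree.node X w ts).yield = []) : ∀ t1 ∈ ts, t1.yield = [] := by
  rw [DTree_yield_node] at h
  intro t1 ht1
  exact List.flatten_eq_nil_iff.mp h _ (List.mem_map_of_mem ht1)

lemma first_child {ts : List (DTree N T W)} {a : GSym N T} {rest : List (GSym N T)}
    (h : ts.map DTree.label = (a :: rest).map some) :
    ∃ t1 ts', ts = t1 :: ts' ∧ t1.label = some a := by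
  cases ts with
  | nil => simp at h
  | cons t1 ts' =>
    simp only [List.map_cons, List.cons.injEq] at h
    exact ⟨t1, ts', rfl, h.1⟩

/-- Symbols of the transformed grammar that are not slashed nonterminals. -/
def GoodSym : GSym (LCNT N T) T → Prop
  | Sum.inr _ => True
  | Sum.inl (LCNT.orig _) => True
  | Sum.inl (LCNT.frozen _) => True
  | Sum.inl (LCNT.slash _ _) => False

lemma emb_good (a : GSym N T) : GoodSym (emb a : GSym (LCNT N T) T) := by
  cases a <;> simp [emb, GoodSym]

lemma frz_good (a : GSym N T) : GoodSym (frz a : GSym (LCNT N T) T) := by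
  cases a <;> simp [frz, GoodSym]

lemma glct_good_nonempty [One W] (G : WCFG N T W) (P : Set (GRule N T W))
    (C : Set (GSym N T)) (hnn : ∀ r ∈ G.rules, r.2.1 ≠ [])
    (t : DTree (LCNT N T) T W) (hwf : t.WF (GLCT G P C))
    (s : GSym (LCNT N T) T) (hs : t.label = some s) (hgood : GoodSym s) :
    t.yield ≠ [] := by
  cases t with
  | leaf a => simp [DTree.yield]
  | gap => cases hwf
  | node X w ts =>
    cases hwf with
    | node hra hch =>
    simp only [DTree.label, Option.some.injEq] at hs
    subst hs
    obtain ⟨rhs, hmem, hmap⟩ := hra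
    simp only [GLCT, Set.mem_union, Set.mem_setOf_eq] at hmem
    rcases hmem with ((((h1 | h2) | h3) | h4) | h5) | h6
    · obtain ⟨X', -, heq⟩ := h1
      simp only [Prod.mk.injEq] at heq
      obtain ⟨hX, hrhs, -⟩ := heq
      subst hrhs
      obtain ⟨t1, ts', h1, h2⟩ := first_child hmap
      subst h1
      have hm : t1 ∈ t1 :: ts' := List.mem_cons_self
      exact node_yield_ne (glct_good_nonempty G P C hnn t1 (hch t1 hm) _ h2 trivial)
    · obtain ⟨X', α, -, heq⟩ := h2
      simp only [Prod.mk.injEq] at heq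
      obtain ⟨hX, hrhs, -⟩ := heq
      subst hrhs
      obtain ⟨t1, ts', h1, h2⟩ := first_child hmap
      subst h1
      have hm : t1 ∈ t1 :: ts' := List.mem_cons_self
      exact node_yield_ne
        (glct_good_nonempty G P C hnn t1 (hch t1 hm) _ h2 (frz_good α))
    · obtain ⟨α, heq⟩ := h3
      simp only [Prod.mk.injEq] at heq
      obtain ⟨hX, -, -⟩ := heq
      subst hX
      simp [GoodSym] at hgood
    · obtain ⟨X', α, β, w', Y, -, heq⟩ := h4
      simp only [Prod.mk.injEq] at heq
      obtain ⟨hX, -, -⟩ := heq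
      subst hX
      simp [GoodSym] at hgood
    · obtain ⟨X', rhs0, w', hr, -, heq⟩ := h5
      simp only [Prod.mk.injEq] at heq
      obtain ⟨hX, hrhs, hw⟩ := heq
      subst hrhs
      have hne : rhs0 ≠ [] := hnn _ hr
      cases rhs0 with
      | nil => exact absurd rfl hne
      | cons a rest =>
        rw [List.map_cons] at hmap
        obtain ⟨t1, ts', h1, h2⟩ := first_child hmap
        subst h1
        have hm : t1 ∈ t1 :: ts' := List.mem_cons_self
        exact node_yield_ne
          (glct_good_nonempty G P C hnn t1 (hch t1 hm) _ h2 (emb_good a))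
    · obtain ⟨X', α, β, w', -, -, heq⟩ := h6
      simp only [Prod.mk.injEq] at heq
      obtain ⟨hX, hrhs, -⟩ := heq
      subst hrhs
      obtain ⟨t1, ts', h1, h2⟩ := first_child hmap
      subst h1
      have hm : t1 ∈ t1 :: ts' := List.mem_cons_self
      exact node_yield_ne
        (glct_good_nonempty G P C hnn t1 (hch t1 hm) _ h2 (frz_good α))
termination_by sizeOf t
decreasing_by
  all_goals
    simp_wf
    have := List.sizeOf_lt_of_mem hm
    subst_vars
    simp only [DTree.node.sizeOf_spec]
    omega

end Aux

/-- In GLCT of a nullary-free grammar, every derivation of ε rooted at a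
slashed nonterminal is a chain of unary slashed rules ending in `x/x → ε`. -/
theorem GLCT_eps_derivations_are_chains [CommSemiring W]
    (G : WCFG N T W) (P : Set (GRule N T W)) (C : Set (GSym N T))
    (hP : P ⊆ G.rules) (hnn : ∀ r ∈ G.rules, r.2.1 ≠ [])
    (x y : GSym N T) (t : DTree (LCNT N T) T W)
    (hwf : t.WF (GLCT G P C))
    (hlab : t.label = some (Sum.inl (LCNT.slash x y)))
    (hyield : t.yield = ([] : List T)) :
    EpsChain P x y t := by
  cases t with
  | leaf a => simp [DTree.label] at hlab
  | gap => cases hwf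
  | node X w ts =>
    cases hwf with
    | node hra hch =>
    simp only [DTree.label, Option.some.injEq, Sum.inl.injEq] at hlab
    subst hlab
    obtain ⟨rhs, hmem, hmap⟩ := hra
    simp only [GLCT, Set.mem_union, Set.mem_setOf_eq] at hmem
    rcases hmem with ((((h1 | h2) | h3) | h4) | h5) | h6
    · obtain ⟨X', -, heq⟩ := h1
      simp only [Prod.mk.injEq] at heq
      obtain ⟨hX, -, -⟩ := heq
      simp at hX
    · obtain ⟨X', α, -, heq⟩ := h2
      simp only [Prod.mk.injEq] at heq
      obtain ⟨hX, -, -⟩ := heq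
      simp at hX
    · obtain ⟨α, heq⟩ := h3
      simp only [Prod.mk.injEq, LCNT.slash.injEq] at heq
      obtain ⟨⟨hx, hy⟩, hrhs, hw⟩ := heq
      subst hx; subst hy; subst hw; subst hrhs
      simp only [List.map_nil, List.map_eq_nil_iff] at hmap
      subst hmap
      exact EpsChain.base
    · obtain ⟨X', α, β, w', Y, hPmem, heq⟩ := h4
      simp only [Prod.mk.injEq, LCNT.slash.injEq] at heq
      obtain ⟨⟨hx, hy⟩, hrhs, hw⟩ := heq
      subst hx; subst hy; subst hw; subst hrhs
      cases β with
      | cons b β' =>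
        rw [List.map_cons, List.cons_append, List.map_cons] at hmap
        obtain ⟨t1, ts', h1, h2⟩ := first_child hmap
        subst h1
        have hm : t1 ∈ t1 :: ts' := List.mem_cons_self
        have hne := glct_good_nonempty G P C hnn t1 (hch t1 hm) _ h2 (emb_good b)
        exact absurd (node_yield_nil hyield t1 hm) hne
      | nil =>
        rw [List.map_nil, List.nil_append] at hmap
        obtain ⟨t1, ts', h1, h2⟩ := first_child hmap
        subst h1
        cases ts' with
        | cons u us => simp at hmap
        | nil =>
          have hm : t1 ∈ [t1] := List.mem_cons_self
          have hy1 : t1.yield = [] := node_yield_nil hyield t1 hm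
          have ch := GLCT_eps_derivations_are_chains G P C hP hnn
            (Sum.inl Y) (Sum.inl X') t1 (hch t1 hm) h2 hy1
          exact EpsChain.step hPmem ch
    · obtain ⟨X', rhs0, w', -, -, heq⟩ := h5
      simp only [Prod.mk.injEq] at heq
      obtain ⟨hX, -, -⟩ := heq
      simp at hX
    · obtain ⟨X', α, β, w', -, -, heq⟩ := h6
      simp only [Prod.mk.injEq] at heq
      obtain ⟨hX, -, -⟩ := heq
      simp at hX
termination_by sizeOf t
decreasing_by
  simp_wf
  have := List.sizeOf_lt_of_mem hm
  subst_vars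
  simp only [DTree.node.sizeOf_spec]
  omega
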